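/- The number of permutations of size n that require exactly n−1 passes of bubblesort to be sorted (the maximum possible) is (n−1)!; these are exactly the permutations ending with the entry 1. -/

import Mathlib

/-- One pass of bubblesort on a list of naturals. -/
def bpass : List ℕ → List ℕ
  | [] => []
  | [a] => [a]
  | a :: b :: l => if b < a then b :: bpass (a :: l) else a :: bpass (b :: l)

/-- The identity permutation 1 2 ... n as a list. -/
def idList (n : ℕ) : List ℕ := List.map (· + 1) (List.range n)

/-- `l` is (the word of) a permutation of size `n`, i.e. a rearrangement of 1,...,n. -/
def IsPermList (n : ℕ) (l : List ℕ) : Prop := l.Perm (idList n)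

/-- position `j` of `l` holds a left-to-right maximum. -/
def IsLTRMax (l : List ℕ) (j : ℕ) : Prop :=
  j < l.length ∧ ∀ i < j, l.getD i 0 < l.getD j 0

instance (l : List ℕ) (j : ℕ) : Decidable (IsLTRMax l j) := by
  unfold IsLTRMax; infer_instance

/-- the number of left-to-right maxima of `l`. -/
def ltrCount (l : List ℕ) : ℕ :=
  ((List.range l.length).filter fun j => decide (IsLTRMax l j)).length

/-- the length of the longest suffix of `l` consisting of left-to-right maxima. -/
def suffLen (l : List ℕ) : ℕ :=
  ((List.range l.length).takeWhile fun j => decide (IsLTRMax l (l.length - 1 - j))).length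

/-- `σ` is a node of the tree `T(π)` of iterated bubblesort preimages. -/
def IsNode (n : ℕ) (π σ : List ℕ) : Prop :=
  IsPermList n σ ∧ ∃ j, bpass^[j] σ = π

/-- `σ` is a node of `T(π)` at height `j` (j passes needed to reach π, and no fewer). -/
def IsNodeAt (n : ℕ) (π σ : List ℕ) (j : ℕ) : Prop :=
  IsPermList n σ ∧ bpass^[j] σ = π ∧ ∀ i < j, bpass^[i] σ ≠ π

/-- `τ` is a leaf: it has no child, i.e. no bubblesort preimage other than itself. -/
def IsLeafNode (n : ℕ) (τ : List ℕ) : Prop :=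
  ¬ ∃ ρ, IsPermList n ρ ∧ ρ ≠ τ ∧ bpass ρ = τ

/-- `T(π)` and `T(τ)` are isomorphic as rooted trees: there is a bijection between
their node sets sending root to root and commuting with the parent map `bpass`. -/
def TreeIso (n : ℕ) (π τ : List ℕ) : Prop :=
  ∃ φ : List ℕ → List ℕ,
    (∀ σ, IsNode n π σ → IsNode n τ (φ σ)) ∧
    (∀ σ σ', IsNode n π σ → IsNode n π σ' → φ σ = φ σ' → σ = σ') ∧
    (∀ ρ, IsNode n τ ρ → ∃ σ, IsNode n π σ ∧ φ σ = ρ) ∧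
    φ π = τ ∧
    (∀ σ, IsNode n π σ → σ ≠ π → φ (bpass σ) = bpass (φ σ))

open List

theorem bpass_perm (l : List ℕ) : (bpass l).Perm l := by
  induction l using bpass.induct with
  | case1 => simp [bpass]
  | case2 a => simp [bpass]
  | case3 a b l h ih =>
      simp only [bpass, if_pos h]
      exact (ih.cons b).trans (List.Perm.swap a b l)
  | case4 a b l h ih =>
      simp only [bpass, if_neg h]
      exact ih.cons a

theorem iterate_bpass_perm (k : ℕ) (l : List ℕ) : (bpass^[k] l).Perm l := by
  induction k generalizing l with
  | zero => simp
  | succ k ih =>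
      rw [Function.iterate_succ_apply]
      exact (ih (bpass l)).trans (bpass_perm l)

theorem bpass_append_max (l : List ℕ) :
    ∀ m, (∀ x ∈ l, x ≤ m) → bpass (l ++ [m]) = bpass l ++ [m] := by
  induction l using bpass.induct with
  | case1 => intro m _; simp [bpass]
  | case2 a =>
      intro m h
      have : ¬ m < a := not_lt.2 (h a (by simp))
      simp [bpass, this]
  | case3 a b l hba ih =>
      intro m h
      have h' : ∀ x ∈ a :: l, x ≤ m := by
        intro x hx; apply h; simp only [List.mem_cons] at hx ⊢; tauto
      simp only [cons_append, bpass, if_pos hba]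
      rw [show a :: (l ++ [m]) = (a :: l) ++ [m] from rfl, ih m h']
  | case4 a b l hba ih =>
      intro m h
      have h' : ∀ x ∈ b :: l, x ≤ m := by
        intro x hx; apply h; simp only [List.mem_cons] at hx ⊢; tauto
      simp only [cons_append, bpass, if_neg hba]
      rw [show b :: (l ++ [m]) = (b :: l) ++ [m] from rfl, ih m h']

theorem iterate_bpass_append_max (k : ℕ) :
    ∀ (l : List ℕ) (m : ℕ), (∀ x ∈ l, x ≤ m) →
      bpass^[k] (l ++ [m]) = bpass^[k] l ++ [m] := by
  induction k with
  | zero => simp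
  | succ k ih =>
      intro l m h
      rw [Function.iterate_succ_apply, Function.iterate_succ_apply,
        bpass_append_max l m h]
      exact ih (bpass l) m (fun x hx => h x ((bpass_perm l).subset hx))

theorem bpass_max' : ∀ l : List ℕ, l = [] ∨
    ∃ l1 m, bpass l = l1 ++ [m] ∧ ∀ x ∈ l, x ≤ m := by
  intro l
  induction l using bpass.induct with
  | case1 => exact Or.inl rfl
  | case2 a => exact Or.inr ⟨[], a, by simp [bpass], by simp⟩
  | case3 a b l hba ih =>
      rcases ih with h | ⟨l1, m, h1, h2⟩
      · simp at h
      refine Or.inr ⟨b :: l1, m, ?_, ?_⟩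
      · simp only [bpass, if_pos hba, h1, cons_append]
      · intro x hx
        simp only [List.mem_cons] at hx
        rcases hx with rfl | rfl | h
        · exact h2 x (by simp)
        · exact le_trans (le_of_lt hba) (h2 a (by simp))
        · exact h2 x (by simp [h])
  | case4 a b l hba ih =>
      rcases ih with h | ⟨l1, m, h1, h2⟩
      · simp at h
      refine Or.inr ⟨a :: l1, m, ?_, ?_⟩
      · simp only [bpass, if_neg hba, h1, cons_append]
      · intro x hx
        simp only [List.mem_cons] at hx
        rcases hx with rfl | rfl | h
        · exact le_trans (not_lt.1 hba) (h2 b (by simp))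
        · exact h2 x (by simp)
        · exact h2 x (by simp [h])

theorem bpass_max (l : List ℕ) (hl : l ≠ []) :
    ∃ l1 m, bpass l = l1 ++ [m] ∧ ∀ x ∈ l, x ≤ m :=
  (bpass_max' l).resolve_left hl

theorem sorted_iterate : ∀ (k : ℕ) (l : List ℕ), l.length ≤ k + 1 →
    (bpass^[k] l).Pairwise (· ≤ ·) := by
  intro k
  induction k with
  | zero =>
      intro l h
      rcases l with _ | ⟨a, _ | ⟨b, t⟩⟩
      · simp
      · simp
      · simp at h
  | succ k ih =>
      intro l h
      rw [Function.iterate_succ_apply]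
      rcases eq_or_ne l [] with rfl | hl
      · exact ih (bpass []) (by simp [bpass])
      · obtain ⟨l1, m, hb, hm⟩ := bpass_max l hl
        have hl1 : ∀ x ∈ l1, x ≤ m := by
          intro x hx
          exact hm x ((bpass_perm l).subset (hb ▸ (by simp [hx] : x ∈ l1 ++ [m])))
        rw [hb, iterate_bpass_append_max k l1 m hl1]
        have hlen : l1.length + 1 = l.length := by
          have := (bpass_perm l).length_eq
          rw [hb] at this
          simpa using this
        have hs := ih l1 (by omega)
        refine List.pairwise_append.2 ⟨hs, by simp, ?_⟩
        intro x hx y hy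
        simp only [mem_singleton] at hy
        subst hy
        exact hl1 x ((iterate_bpass_perm k l1).subset hx)

theorem length_idList (n : ℕ) : (idList n).length = n := by simp [idList]

theorem sorted_idList (n : ℕ) : (idList n).Pairwise (· ≤ ·) := by
  unfold idList
  exact List.pairwise_lt_range.map _
    (by intro a b h; show a + 1 ≤ b + 1; omega)

theorem nodup_idList (n : ℕ) : (idList n).Nodup := by
  unfold idList
  exact List.nodup_range.map (by intro a b h; simpa using h)

theorem mem_idList {n x : ℕ} : x ∈ idList n ↔ 1 ≤ x ∧ x ≤ n := by
  simp only [idList, List.mem_map, List.mem_range]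
  constructor
  · rintro ⟨i, hi, rfl⟩; omega
  · rintro ⟨h1, h2⟩; exact ⟨x - 1, by omega, by omega⟩

theorem idList_succ (n : ℕ) : idList (n + 1) = idList n ++ [n + 1] := by
  simp [idList, List.range_succ]

theorem idList_cons (n : ℕ) :
    idList (n + 1) = 1 :: List.map (· + 1) (List.map Nat.succ (List.range n)) := by
  simp [idList, List.range_succ_eq_map]

theorem iterate_eq_id {k n : ℕ} {σ : List ℕ} (hσ : σ.Perm (idList n))
    (hlen : n ≤ k + 1) : bpass^[k] σ = idList n := by
  have hlσ : σ.length = n := by rw [hσ.length_eq, length_idList]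
  exact List.Perm.eq_of_pairwise (fun a b _ _ h1 h2 => le_antisymm h1 h2)
    (sorted_iterate k σ (by omega)) (sorted_idList n) ((iterate_bpass_perm k σ).trans hσ)

theorem indexOf_bpass_pos (m : ℕ) (l : List ℕ) :
    (∀ x ∈ l, m ≤ x) → m ∈ l → 1 ≤ l.idxOf m →
      (bpass l).idxOf m = l.idxOf m - 1 := by
  induction l using bpass.induct with
  | case1 => intro _ h _; simp at h
  | case2 a =>
      intro _ hm hi
      simp only [mem_singleton] at hm
      subst hm
      simp [List.idxOf_cons_self] at hi
  | case3 a b l hba ih =>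
      intro hmin hm hi
      have ham : a ≠ m := by
        rintro rfl
        simp [List.idxOf_cons_self] at hi
      simp only [bpass, if_pos hba]
      rcases eq_or_ne b m with rfl | hbm
      · rw [List.idxOf_cons_self, List.idxOf_cons_ne _ ham,
          List.idxOf_cons_self]
      · have hml : m ∈ l := by
          simp only [List.mem_cons] at hm
          rcases hm with h | h | h
          · exact absurd h.symm ham
          · exact absurd h.symm hbm
          · exact h
        have e1 := ih (fun x hx => hmin x (by
            simp only [List.mem_cons] at hx ⊢; tauto))
          (by simp [hml]) (by rw [List.idxOf_cons_ne _ ham]; omega)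
        have e2 := List.idxOf_cons_ne (a := m) l ham
        have e3 := List.idxOf_cons_ne (a := m) l hbm
        have e4 := List.idxOf_cons_ne (a := m) (b :: l) ham
        have e5 := List.idxOf_cons_ne (a := m) (bpass (a :: l)) hbm
        rw [e5, e1, e4]
        omega
  | case4 a b l hba ih =>
      intro hmin hm hi
      have ham : a ≠ m := by
        rintro rfl
        simp [List.idxOf_cons_self] at hi
      have hbm : b ≠ m := by
        rintro rfl
        exact hba (lt_of_le_of_ne (hmin a (by simp)) ham.symm)
      have hml : m ∈ l := by
        simp only [List.mem_cons] at hm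
        rcases hm with h | h | h
        · exact absurd h.symm ham
        · exact absurd h.symm hbm
        · exact h
      simp only [bpass, if_neg hba]
      have e1 := ih (fun x hx => hmin x (by
          simp only [List.mem_cons] at hx ⊢; tauto))
        (by simp [hml]) (by rw [List.idxOf_cons_ne _ hbm]; omega)
      have e3 := List.idxOf_cons_ne (a := m) l hbm
      have e4 := List.idxOf_cons_ne (a := m) (b :: l) ham
      have e5 := List.idxOf_cons_ne (a := m) (bpass (b :: l)) ham
      rw [e5, e1, e4]
      omega

theorem indexOf_bpass_zero (m : ℕ) (l : List ℕ) (hmin : ∀ x ∈ l, m ≤ x)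
    (hm : m ∈ l) (h0 : l.idxOf m = 0) : (bpass l).idxOf m = 0 := by
  rcases l with _ | ⟨a, t⟩
  · simp at hm
  · have ham : a = m := by
      by_contra hne
      rw [List.idxOf_cons_ne _ hne] at h0
      simp at h0
    subst ham
    rcases t with _ | ⟨b, t'⟩
    · simp [bpass]
    · have : ¬ b < a := not_lt.2 (hmin b (by simp))
      simp [bpass, this, List.idxOf_cons_self]

theorem iterate_fast : ∀ (k n : ℕ) (σ : List ℕ), σ.Perm (idList n) →
    n ≤ k + 2 → σ.idxOf 1 ≤ k → bpass^[k] σ = idList n := by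
  intro k
  induction k with
  | zero =>
      intro n σ hσ hn hi
      rcases (by omega : n ≤ 1 ∨ n = 2) with h | rfl
      · exact iterate_eq_id hσ (by omega)
      · have hid : idList 2 = [1, 2] := by decide
        rw [hid] at hσ ⊢
        have hlen : σ.length = 2 := by simpa using hσ.length_eq
        rcases σ with _ | ⟨a, _ | ⟨b, _ | ⟨c, t⟩⟩⟩
        · simp at hlen
        · simp at hlen
        · have ha : a = 1 := by
            by_contra hne
            rw [List.idxOf_cons_ne _ hne] at hi
            omega
          subst ha
          have hb : [b] = [2] := by
            have := hσ.cons_inv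
            rwa [List.perm_singleton] at this
          have hb' : b = 2 := by simpa using hb
          subst hb'
          rfl
        · simp at hlen
  | succ k ih =>
      intro n σ hσ hn hi
      rcases (by omega : n ≤ k + 2 ∨ n = k + 3) with h | rfl
      · exact iterate_eq_id hσ (by omega)
      · have hmin : ∀ x ∈ σ, 1 ≤ x := fun x hx => (mem_idList.1 (hσ.subset hx)).1
        have h1σ : 1 ∈ σ := hσ.mem_iff.2 (mem_idList.2 ⟨le_refl 1, by omega⟩)
        have hne : σ ≠ [] := by
          intro h; rw [h] at h1σ; simp at h1σ
        obtain ⟨l1, m, hb, hm⟩ := bpass_max σ hne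
        have hmn : m = k + 3 := by
          have hmem : m ∈ σ := (bpass_perm σ).subset (hb ▸ (by simp : m ∈ l1 ++ [m]))
          have h1 : m ≤ k + 3 := (mem_idList.1 (hσ.subset hmem)).2
          have h2 : k + 3 ≤ m := hm _ (hσ.mem_iff.2 (mem_idList.2 ⟨by omega, le_refl _⟩))
          omega
        subst hmn
        have hperm1 : (l1 ++ [k + 3]).Perm (idList (k + 2) ++ [k + 3]) := by
          rw [← hb, ← idList_succ]
          exact (bpass_perm σ).trans hσ
        have hl1perm : l1.Perm (idList (k + 2)) :=
          (List.perm_append_right_iff _).1 hperm1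
        have h1l1 : 1 ∈ l1 := hl1perm.mem_iff.2 (mem_idList.2 ⟨le_refl 1, by omega⟩)
        have hidx : (bpass σ).idxOf 1 ≤ k := by
          rcases Nat.eq_zero_or_pos (σ.idxOf 1) with h0 | hpos
          · rw [indexOf_bpass_zero 1 σ hmin h1σ h0]; omega
          · rw [indexOf_bpass_pos 1 σ hmin h1σ hpos]; omega
        have hidx1 : l1.idxOf 1 ≤ k := by
          rw [hb, List.idxOf_append_of_mem h1l1] at hidx
          exact hidx
        have hl1max : ∀ x ∈ l1, x ≤ k + 3 := by
          intro x hx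
          have := (mem_idList.1 (hl1perm.subset hx)).2
          omega
        rw [Function.iterate_succ_apply, hb,
          iterate_bpass_append_max k l1 (k + 3) hl1max,
          ih (k + 2) l1 hl1perm (by omega) hidx1]
        exact (idList_succ (k + 2)).symm

theorem indexOf_one_idList (n : ℕ) (hn : 1 ≤ n) : (idList n).idxOf 1 = 0 := by
  obtain ⟨m, rfl⟩ : ∃ m, n = m + 1 := ⟨n - 1, by omega⟩
  rw [idList_cons m]
  exact List.idxOf_cons_self

theorem indexOf_iterate {n : ℕ} (σ : List ℕ) (hσ : σ.Perm (idList n))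
    (h1 : σ.idxOf 1 = n - 1) (hn : 1 ≤ n) :
    ∀ k, k ≤ n - 1 → (bpass^[k] σ).idxOf 1 = n - 1 - k := by
  intro k
  induction k with
  | zero => simpa using h1
  | succ k ih =>
      intro hk
      have ihv := ih (by omega)
      have hperm : (bpass^[k] σ).Perm (idList n) := (iterate_bpass_perm k σ).trans hσ
      have hmin : ∀ x ∈ bpass^[k] σ, 1 ≤ x := fun x hx => (mem_idList.1 (hperm.subset hx)).1
      have h1m : 1 ∈ bpass^[k] σ := hperm.mem_iff.2 (mem_idList.2 ⟨le_refl 1, hn⟩)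
      rw [Function.iterate_succ_apply',
        indexOf_bpass_pos 1 _ hmin h1m (by omega), ihv]
      omega

/-- The permutations of size `n` requiring exactly `n-1` passes of bubblesort are
exactly those ending with the entry `1`, and there are `(n-1)!` of them. -/
theorem stmt_15 (n : ℕ) (hn : 1 ≤ n) :
    {σ : List ℕ | IsNodeAt n (idList n) σ (n - 1)} =
      {σ : List ℕ | IsPermList n σ ∧ σ.getLast? = some 1} ∧
    Set.ncard {σ : List ℕ | IsNodeAt n (idList n) σ (n - 1)} = Nat.factorial (n - 1) := by
  have hset : {σ : List ℕ | IsNodeAt n (idList n) σ (n - 1)} =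
      {σ : List ℕ | IsPermList n σ ∧ σ.getLast? = some 1} := by
    ext σ
    simp only [Set.mem_setOf_eq, IsNodeAt, IsPermList]
    constructor
    · rintro ⟨hp, h1, h2⟩
      refine ⟨hp, ?_⟩
      rcases (by omega : n = 1 ∨ 2 ≤ n) with rfl | hn2
      · have hσ : σ = idList 1 := by simpa using h1
        rw [hσ]
        rfl
      · by_contra hlast
        have h1σ : 1 ∈ σ := hp.mem_iff.2 (mem_idList.2 ⟨le_refl 1, hn⟩)
        have hlt : σ.idxOf 1 < σ.length := List.idxOf_lt_length_iff.2 h1σ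
        have hlσ : σ.length = n := by rw [hp.length_eq, length_idList]
        have hne : σ.idxOf 1 ≠ n - 1 := by
          intro he
          apply hlast
          have hg : σ[σ.idxOf 1]'hlt = 1 := List.getElem_idxOf hlt
          rw [List.getLast?_eq_getElem?, List.getElem?_eq_getElem (by omega)]
          have hv : σ.length - 1 = σ.idxOf 1 := by omega
          simp only [hv, hg]
        have hfast := iterate_fast (n - 2) n σ hp (by omega) (by omega)
        exact h2 (n - 2) (by omega) hfast
    · rintro ⟨hp, hlast⟩
      refine ⟨hp, iterate_eq_id hp (by omega), ?_⟩
      rcases (by omega : n = 1 ∨ 2 ≤ n) with rfl | hn2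
      · intro i hi; omega
      · have hσnodup : σ.Nodup := hp.nodup_iff.2 (nodup_idList n)
        have hdrop : σ.dropLast ++ [1] = σ := List.dropLast_append_getLast? 1 hlast
        have hlσ : σ.length = n := by rw [hp.length_eq, length_idList]
        have hnot : 1 ∉ σ.dropLast := by
          intro hmem
          have hnd := hσnodup
          rw [← hdrop] at hnd
          rcases List.nodup_append.1 hnd with ⟨_, _, hdisj⟩
          exact hdisj 1 hmem 1 (by simp) rfl
        have h0 := List.idxOf_append_of_notMem (l₂ := [1]) (a := 1) hnot
        rw [hdrop] at h0
        have hdl : σ.dropLast.length = n - 1 := by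
          rw [List.length_dropLast, hlσ]
        have hidx : σ.idxOf 1 = n - 1 := by
          rw [h0, hdl, List.idxOf_cons_self]
          omega
        intro i hi hcon
        have hiter := indexOf_iterate σ hp hidx hn i (by omega)
        rw [hcon, indexOf_one_idList n hn] at hiter
        omega
  refine ⟨hset, ?_⟩
  rw [hset]
  obtain ⟨m, rfl⟩ : ∃ m, n = m + 1 := ⟨n - 1, by omega⟩
  set L : List ℕ := List.map (· + 1) (List.map Nat.succ (List.range m)) with hL
  have hid : idList (m + 1) = 1 :: L := idList_cons m
  have himg : {σ : List ℕ | IsPermList (m + 1) σ ∧ σ.getLast? = some 1} =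
      (fun l => l ++ [1]) '' {l : List ℕ | l.Perm L} := by
    ext σ
    simp only [Set.mem_setOf_eq, Set.mem_image, IsPermList]
    constructor
    · rintro ⟨hp, hlast⟩
      have hdrop : σ.dropLast ++ [1] = σ := List.dropLast_append_getLast? 1 hlast
      refine ⟨σ.dropLast, ?_, hdrop⟩
      have h2 : (idList (m + 1)).Perm (L ++ [1]) := by
        rw [hid]
        exact (List.perm_append_singleton 1 L).symm
      have h3 : (σ.dropLast ++ [1]).Perm (L ++ [1]) := by
        rw [hdrop]
        exact hp.trans h2
      exact (List.perm_append_right_iff _).1 h3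
    · rintro ⟨l, hl, rfl⟩
      refine ⟨?_, List.getLast?_concat⟩
      rw [hid]
      exact (hl.append_right [1]).trans (List.perm_append_singleton 1 L)
  rw [himg, Set.ncard_image_of_injective _ (List.append_left_injective [1])]
  have hLnodup : L.Nodup := by
    rw [hL]
    exact (List.nodup_range.map (fun a b h => by simpa using h)).map
      (fun a b h => by simpa using h)
  have hsetL : {l : List ℕ | l.Perm L} = ↑(L.permutations.toFinset) := by
    ext l
    simp [List.mem_permutations]
  rw [hsetL, Set.ncard_coe_finset,
    List.toFinset_card_of_nodup (List.nodup_permutations L hLnodup),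
    List.length_permutations]
  simp [hL]
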